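/- Let W, W' be finite-dimensional vector spaces over a field F and A ⊆ W a finite non-empty set of Freiman dimension r = r_F(A). Then there exist a_1,…,a_{r+1} ∈ A such that for any w_1',…,w_{r+1}' ∈ W' there is a unique Freiman 2-homomorphism φ : A → W' with φ(a_i) = w_i' for all i; moreover if w_1',…,w_{r+1}' are linearly independent then φ is a Freiman 2-isomorphism onto its image. -/

import Mathlib

/-- The `F`-vector space of Freiman 2-homomorphisms from `A` to `F`. -/
def freimanHoms (F : Type*) [Field F] {G : Type*} [AddCommGroup G] (A : Set G) :
    Submodule F (A → F) where
  carrier := {φ | ∀ a b c d : A, (a : G) + b = (c : G) + d → φ a + φ b = φ c + φ d}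
  add_mem' := by
    intro f g hf hg a b c d h
    have h1 := hf a b c d h
    have h2 := hg a b c d h
    simp only [Pi.add_apply]
    linear_combination h1 + h2
  zero_mem' := by intro a b c d h; simp
  smul_mem' := by
    intro c f hf a b c' d h
    have h1 := hf a b c' d h
    simp only [Pi.smul_apply, smul_eq_mul]
    linear_combination c * h1

/-- The Freiman dimension `r_F(A) = dim Hom₂(A, F) − 1`. -/
noncomputable def freimanDim (F : Type*) [Field F] {G : Type*} [AddCommGroup G]
    (A : Set G) : ℕ :=
  Module.finrank F (freimanHoms F A) - 1

/-- A Freiman 2-homomorphism from `A` (as a subtype) to an abelian group `H`. -/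
def IsFreiman2HomOn {G H : Type*} [AddCommGroup G] [AddCommGroup H] (A : Set G)
    (φ : A → H) : Prop :=
  ∀ a b c d : A, (a : G) + b = (c : G) + d → φ a + φ b = φ c + φ d

open Module

/-- For `A ⊆ W` finite nonempty of Freiman dimension `r`, there are `a₁,…,a_{r+1} ∈ A`
such that any prescribed values `w'₁,…,w'_{r+1} ∈ W'` are attained by a unique Freiman
2-homomorphism `φ : A → W'`; moreover if the `w'ᵢ` are linearly independent then `φ` is a
Freiman 2-isomorphism onto its image. -/
theorem freiman_hom_interpolation {F W W' : Type*} [Field F]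
    [AddCommGroup W] [Module F W] [FiniteDimensional F W]
    [AddCommGroup W'] [Module F W'] [FiniteDimensional F W']
    (A : Set W) (hA : A.Finite) (hne : A.Nonempty) (r : ℕ) (hr : r = freimanDim F A) :
    ∃ a : Fin (r + 1) → A, Function.Injective a ∧
      (∀ w' : Fin (r + 1) → W',
        ∃! φ : A → W', IsFreiman2HomOn A φ ∧ ∀ i, φ (a i) = w' i) ∧
      (∀ w' : Fin (r + 1) → W', LinearIndependent F w' →
        ∀ φ : A → W', IsFreiman2HomOn A φ → (∀ i, φ (a i) = w' i) →
          Function.Injective φ ∧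
            ∀ p q u v : A, ((p : W) + q = (u : W) + v ↔ φ p + φ q = φ u + φ v)) := by
  classical
  haveI : Fintype A := hA.fintype
  set V : Submodule F (A → F) := freimanHoms F A with hVdef
  -- basic facts about members of V
  have hmemV : ∀ (f : A → F), f ∈ V ↔
      ∀ a b c d : A, (a : W) + b = (c : W) + d → f a + f b = f c + f d := fun f => Iff.rfl
  -- the inclusion map
  let Θ : V →ₗ[F] (A → F) := V.subtype
  have hΘinj : Function.Injective Θ := Subtype.val_injective
  -- evaluation functionals
  let ε : A → Module.Dual F V := fun x => (LinearMap.proj x) ∘ₗ Θ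
  have hεapp : ∀ (x : A) (ψ : V), ε x ψ = (ψ : A → F) x := fun x ψ => rfl
  -- the evaluations span the dual of V
  have hspan : Submodule.span F (Set.range ε) = ⊤ := by
    have hcoord : ∀ x : A, ε x = Θ.dualMap ((Pi.basisFun F A).coord x) := by
      intro x; ext ψ
      simp [ε, Basis.coord_apply, Pi.basisFun_repr]
    have hcomp : ε = Θ.dualMap ∘ (Pi.basisFun F A).coord := funext hcoord
    rw [hcomp, Set.range_comp, ← Submodule.map_span]
    have h1 : Submodule.span F (Set.range (Pi.basisFun F A).coord) = ⊤ := by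
      rw [← (Pi.basisFun F A).coe_dualBasis]
      exact (Pi.basisFun F A).dualBasis.span_eq
    rw [h1, Submodule.map_top, LinearMap.range_eq_top]
    exact LinearMap.dualMap_surjective_of_injective hΘinj
  -- extract a basis of the dual from the evaluations
  obtain ⟨b, hbsub, hbspan, hbli⟩ := exists_linearIndependent F (Set.range ε)
  have hbtop : Submodule.span F b = ⊤ := by rw [hbspan, hspan]
  let B : Basis b F (Module.Dual F V) :=
    Basis.mk hbli (by rw [Subtype.range_coe]; exact hbtop.ge)
  haveI : Fintype b := FiniteDimensional.fintypeBasisIndex B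
  -- dimension count
  have hone : (fun _ : A => (1 : F)) ∈ V := by
    intro a b c d h; simp
  have hVpos : 0 < finrank F V := by
    rw [Module.finrank_pos_iff_exists_ne_zero]
    refine ⟨⟨_, hone⟩, ?_⟩
    obtain ⟨x, hx⟩ := hne
    intro h0
    have := congrArg (fun ψ : V => (ψ : A → F) ⟨x, hx⟩) h0
    simp at this
  have hn : finrank F V = r + 1 := by
    rw [hr]
    unfold freimanDim
    rw [← hVdef]
    omega
  have hcardb : Fintype.card b = r + 1 := by
    rw [← Module.finrank_eq_card_basis B, Subspace.dual_finrank_eq, hn]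
  -- index the basis by Fin (r+1)
  let e : Fin (r + 1) ≃ b := (Fintype.equivFinOfCardEq hcardb).symm
  have hmem : ∀ i : Fin (r + 1), ∃ x : A, ε x = (e i : Module.Dual F V) :=
    fun i => hbsub (e i).2
  choose a ha using hmem
  have hainj : Function.Injective a := by
    intro i j hij
    have : (e i : Module.Dual F V) = (e j : Module.Dual F V) := by
      rw [← ha, ← ha, hij]
    exact e.injective (Subtype.val_injective this)
  -- evaluation map at the chosen points
  let ev : V →ₗ[F] (Fin (r + 1) → F) := LinearMap.pi (fun i => ε (a i))
  have hevinj : Function.Injective ev := by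
    rw [← LinearMap.ker_eq_bot]
    rw [Submodule.eq_bot_iff]
    intro ψ hψ
    rw [LinearMap.mem_ker] at hψ
    have hb0 : ∀ f ∈ b, f ψ = 0 := by
      intro f hf
      obtain ⟨i, hi⟩ := e.surjective ⟨f, hf⟩
      have := congrFun hψ i
      simp only [ev, LinearMap.pi_apply, Pi.zero_apply] at this
      rw [ha i, hi] at this
      exact this
    have hall : ∀ f : Module.Dual F V, f ψ = 0 := by
      intro f
      have hf : f ∈ Submodule.span F b := by rw [hbtop]; trivial
      induction hf using Submodule.span_induction with
      | mem g hg => exact hb0 g hg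
      | zero => simp
      | add g h _ _ hg hh => simp [hg, hh]
      | smul c g _ hg => simp [hg]
    exact (Module.forall_dual_apply_eq_zero_iff F ψ).mp hall
  let E : V ≃ₗ[F] (Fin (r + 1) → F) :=
    LinearMap.linearEquivOfInjective ev hevinj (by rw [hn, finrank_fin_fun])
  -- the dual basis inside V
  let d : Basis (Fin (r + 1)) F V := (Pi.basisFun F (Fin (r + 1))).map E.symm
  have hdev : ∀ i j, ((d i : V) : A → F) (a j) = if i = j then 1 else 0 := by
    intro i j
    have h1 : E (d i) = Pi.single i 1 := by
      simp [d, Pi.basisFun_apply]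
    have h2 : E (d i) = ev (d i) := LinearMap.linearEquivOfInjective_apply _ _ _
    have h3 : ev (d i) j = ((d i : V) : A → F) (a j) := rfl
    rw [← h3, ← h2, h1]
    by_cases hij : i = j <;> simp [hij, Pi.single_apply]
  -- the interpolating homomorphism
  let φ₀ : (Fin (r + 1) → W') → (A → W') := fun w' x =>
    ∑ i, ((d i : V) : A → F) x • w' i
  have hφ₀hom : ∀ w', IsFreiman2HomOn A (φ₀ w') := by
    intro w' p q u v h
    simp only [φ₀, ← Finset.sum_add_distrib]
    refine Finset.sum_congr rfl fun i _ => ?_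
    rw [← add_smul, ← add_smul, (d i).2 p q u v h]
  have hφ₀val : ∀ w' j, φ₀ w' (a j) = w' j := by
    intro w' j
    simp only [φ₀, hdev]
    rw [Finset.sum_eq_single j]
    · simp
    · intro i _ hij; simp [hij]
    · intro h; exact absurd (Finset.mem_univ j) h
  -- uniqueness
  have huniq : ∀ (w' : Fin (r + 1) → W') (φ : A → W'),
      IsFreiman2HomOn A φ → (∀ i, φ (a i) = w' i) → φ = φ₀ w' := by
    intro w' φ hφ hφval
    funext x
    rw [← sub_eq_zero, ← (Module.forall_dual_apply_eq_zero_iff F (φ x - φ₀ w' x))]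
    intro lam
    have hmem : (fun y : A => lam (φ y - φ₀ w' y)) ∈ V := by
      intro p q u v h
      have h1 := hφ p q u v h
      have h2 := hφ₀hom w' p q u v h
      simp only [← map_add, ← map_sub]
      congr 1
      rw [sub_add_sub_comm, sub_add_sub_comm, h1, h2]
    set ψ : V := ⟨_, hmem⟩ with hψdef
    have hψ0 : ev ψ = 0 := by
      funext i
      simp only [ev, LinearMap.pi_apply, hεapp, Pi.zero_apply]
      show lam (φ (a i) - φ₀ w' (a i)) = 0
      rw [hφval i, hφ₀val w' i, sub_self, map_zero]
    have : ψ = 0 := hevinj (by rw [hψ0, map_zero])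
    have := congrArg (fun ψ : V => (ψ : A → F) x) this
    exact this
  refine ⟨a, hainj, ?_, ?_⟩
  · intro w'
    refine ⟨φ₀ w', ⟨hφ₀hom w', hφ₀val w'⟩, fun φ ⟨h1, h2⟩ => huniq w' φ h1 h2⟩
  · intro w' hli φ hφ hφval
    have hφeq : φ = φ₀ w' := huniq w' φ hφ hφval
    have hiff : ∀ p q u v : A, ((p : W) + q = (u : W) + v ↔ φ p + φ q = φ u + φ v) := by
      intro p q u v
      constructor
      · exact fun h => hφ p q u v h
      · intro h
        rw [hφeq] at h
        -- extract coefficient identities from linear independence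
        have hsum : ∑ i, ((((d i : V) : A → F) p + ((d i : V) : A → F) q)
            - (((d i : V) : A → F) u + ((d i : V) : A → F) v)) • w' i = 0 := by
          simp only [sub_smul, add_smul, Finset.sum_sub_distrib, Finset.sum_add_distrib]
          simp only [φ₀] at h
          rw [sub_eq_zero]
          exact h
        have hcoef : ∀ i, ((d i : V) : A → F) p + ((d i : V) : A → F) q
            = ((d i : V) : A → F) u + ((d i : V) : A → F) v := by
          intro i
          have := Fintype.linearIndependent_iff.mp hli _ hsum i
          linear_combination this
        -- hence every element of V satisfies the identity
        have hallψ : ∀ ψ : V, (ψ : A → F) p + (ψ : A → F) q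
            = (ψ : A → F) u + (ψ : A → F) v := by
          intro ψ
          let L : V →ₗ[F] F := ε p + ε q - ε u - ε v
          have hL : L = 0 := by
            apply d.ext
            intro i
            simp only [L, LinearMap.sub_apply, LinearMap.add_apply, hεapp,
              LinearMap.zero_apply]
            linear_combination hcoef i
          have := congrArg (fun M : V →ₗ[F] F => M ψ) hL
          simp only [L, LinearMap.sub_apply, LinearMap.add_apply, hεapp,
            LinearMap.zero_apply] at this
          linear_combination this
        -- apply with linear functionals on W
        rw [← sub_eq_zero, ← (Module.forall_dual_apply_eq_zero_iff F
          ((p : W) + q - ((u : W) + v)))]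
        intro lam
        have hmem : (fun y : A => lam (y : W)) ∈ V := by
          intro p' q' u' v' h'
          simp only [← map_add, h']
        have := hallψ ⟨_, hmem⟩
        simp only [← map_add] at this
        rw [map_sub, this, sub_self]
    refine ⟨?_, hiff⟩
    intro p q hpq
    have := (hiff p p q p).mpr (by rw [hpq])
    exact Subtype.ext (add_right_cancel this)
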